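/- For every n ≥ 5 there exists a graph G on n vertices such that both G and its complement have diameter exactly 2 (and hence rvc(G) = rvc(complement of G) = 1, so rvc(G) + rvc(complement of G) = 2). -/

import Mathlib

open SimpleGraph

/-- A coloring `c` (using colors `< k`) makes `G` rainbow vertex-connected: every pair of
vertices is joined by a path whose internal vertices receive distinct colors (all `< k`). -/
def IsRainbowVCColoring {V : Type*} (G : SimpleGraph V) (c : V → ℕ) (k : ℕ) : Prop :=
  ∀ u v : V, ∃ p : G.Walk u v, p.IsPath ∧
    (p.support.tail.dropLast.map c).Nodup ∧
    ∀ x ∈ p.support.tail.dropLast, c x < k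

/-- The rainbow vertex-connection number: the least number of colors making `G`
rainbow vertex-connected. -/
noncomputable def rvc {V : Type*} (G : SimpleGraph V) : ℕ :=
  sInf {k | ∃ c : V → ℕ, IsRainbowVCColoring G c k}

/-- cycle adjacency on residues mod 5 -/
def cadj (a b : ℕ) : Prop := (a + 1) % 5 = b ∨ (b + 1) % 5 = a

instance : ∀ a b, Decidable (cadj a b) := fun a b => by unfold cadj; infer_instance

lemma key1 : ∀ a b : Fin 5, ¬ cadj a b →
    ∃ r : Fin 5, cadj a.val r.val ∧ cadj r.val b.val ∧ r ≠ a ∧ r ≠ b := by decide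

lemma key2 : ∀ a b : Fin 5, cadj a b →
    ∃ r : Fin 5, ¬ cadj a.val r.val ∧ ¬ cadj r.val b.val ∧ r ≠ a ∧ r ≠ b := by decide

def myG (n : ℕ) : SimpleGraph (Fin n) where
  Adj u v := cadj (u.val % 5) (v.val % 5)
  symm := ⟨by intro u v h; unfold cadj at *; tauto⟩
  loopless := ⟨by intro u h; unfold cadj at h; omega⟩

/-- hub property: every pair equal, adjacent, or joined by a 2-path with distinct vertices -/
def Hub {V : Type*} (G : SimpleGraph V) : Prop :=
  ∀ u v : V, u = v ∨ G.Adj u v ∨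
    (u ≠ v ∧ ∃ w, w ≠ u ∧ w ≠ v ∧ G.Adj u w ∧ G.Adj w v)

lemma hub_edist_le_two {V : Type*} {G : SimpleGraph V} (h : Hub G) (u v : V) :
    G.edist u v ≤ 2 := by
  rcases h u v with rfl | hadj | ⟨hne, w, hwu, hwv, h1, h2⟩
  · simp [edist_self]
  · calc G.edist u v ≤ (hadj.toWalk).length := edist_le _
      _ ≤ 2 := by simp
  · calc G.edist u v ≤ ((Walk.cons h1 h2.toWalk)).length := edist_le _
      _ ≤ 2 := by simp

lemma hub_diam_two {V : Type*} {G : SimpleGraph V} (h : Hub G)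
    {a b : V} (hab : a ≠ b) (hnadj : ¬ G.Adj a b) : G.diam = 2 := by
  have hle : G.ediam ≤ 2 := ediam_le_of_edist_le (hub_edist_le_two h)
  have hedist : G.edist a b = 2 := by
    have h2 : G.edist a b ≤ 2 := hub_edist_le_two h a b
    have h0 : G.edist a b ≠ 0 := (edist_eq_zero_iff.ne.mpr hab)
    have h1 : G.edist a b ≠ 1 := fun hh => hnadj (edist_eq_one_iff_adj.mp hh)
    have hnt : G.edist a b ≠ ⊤ := (h2.trans_lt (Ne.lt_top (by simp))).ne
    lift G.edist a b to ℕ using hnt with d hd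
    have h2' : d ≤ 2 := by exact_mod_cast h2
    have h0' : d ≠ 0 := by exact_mod_cast h0
    have h1' : d ≠ 1 := by exact_mod_cast h1
    have : d = 2 := by omega
    exact_mod_cast congrArg Nat.cast this
  have : G.ediam = 2 := le_antisymm hle (hedist ▸ edist_le_ediam)
  simp [diam, this]

lemma hub_rvc_one {V : Type*} {G : SimpleGraph V} (h : Hub G)
    {a b : V} (hab : a ≠ b) (hnadj : ¬ G.Adj a b) : rvc G = 1 := by
  have h1 : (1 : ℕ) ∈ {k | ∃ c : V → ℕ, IsRainbowVCColoring G c k} := by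
    refine ⟨fun _ => 0, fun u v => ?_⟩
    rcases h u v with rfl | hadj | ⟨hne, w, hwu, hwv, ha1, ha2⟩
    · exact ⟨Walk.nil, by simp, by simp, by simp⟩
    · exact ⟨hadj.toWalk, by simp [hadj.ne], by simp [Walk.support_cons], by
        simp [Walk.support_cons]⟩
    · refine ⟨Walk.cons ha1 ha2.toWalk, ?_, ?_, ?_⟩
      · simp [Walk.support_cons, hne, hwu.symm, hwv.symm, ha2.ne]
      · simp [Walk.support_cons]
      · simp [Walk.support_cons]
  have h0 : (0 : ℕ) ∉ {k | ∃ c : V → ℕ, IsRainbowVCColoring G c k} := by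
    rintro ⟨c, hc⟩
    obtain ⟨p, hp, -, hlt⟩ := hc a b
    cases p with
    | nil => exact hab rfl
    | cons hadj q =>
      cases q with
      | nil => exact hnadj hadj
      | cons hadj2 q2 =>
        rename_i w x
        have hmem : w ∈ (Walk.cons hadj (Walk.cons hadj2 q2)).support.tail.dropLast := by
          simp only [Walk.support_cons, List.tail_cons]
          rw [List.dropLast_cons_of_ne_nil q2.support_ne_nil]
          exact List.mem_cons_self
        have := hlt w hmem
        omega
  refine le_antisymm (Nat.sInf_le h1) ?_
  rcases Nat.eq_zero_or_pos (sInf {k | ∃ c : V → ℕ, IsRainbowVCColoring G c k}) with hz | hp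
  · rcases Nat.sInf_eq_zero.mp hz with hmem | hemp
    · exact absurd hmem h0
    · exact absurd (hemp ▸ h1) (Set.notMem_empty 1)
  · exact hp

theorem exists_self_compl_diam_two (n : ℕ) (hn : 5 ≤ n) :
    ∃ G : SimpleGraph (Fin n), G.diam = 2 ∧ Gᶜ.diam = 2 ∧
      rvc G = 1 ∧ rvc Gᶜ = 1 ∧ rvc G + rvc Gᶜ = 2 := by
  set G := myG n with hG
  have hmod : ∀ u : Fin n, u.val % 5 < 5 := fun u => Nat.mod_lt _ (by omega)
  have hadjG : ∀ u v : Fin n, G.Adj u v ↔ cadj (u.val % 5) (v.val % 5) := fun u v => Iff.rfl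
  have hadjC : ∀ u v : Fin n, Gᶜ.Adj u v ↔ u ≠ v ∧ ¬ cadj (u.val % 5) (v.val % 5) := by
    intro u v; simp [compl_adj, hadjG]
  have hubG : Hub G := by
    intro u v
    by_cases huv : u = v
    · exact Or.inl huv
    by_cases hc : cadj (u.val % 5) (v.val % 5)
    · exact Or.inr (Or.inl hc)
    refine Or.inr (Or.inr ⟨huv, ?_⟩)
    obtain ⟨r, hr1, hr2, hra, hrb⟩ := key1 ⟨u.val % 5, hmod u⟩ ⟨v.val % 5, hmod v⟩ hc
    refine ⟨⟨r.val, r.isLt.trans_le hn⟩, ?_, ?_, ?_, ?_⟩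
    · intro hh; apply hra; apply Fin.ext
      have : r.val % 5 = u.val % 5 := by rw [← hh]
      simpa [Nat.mod_eq_of_lt r.isLt] using this
    · intro hh; apply hrb; apply Fin.ext
      have : r.val % 5 = v.val % 5 := by rw [← hh]
      simpa [Nat.mod_eq_of_lt r.isLt] using this
    · rw [hadjG]; simp only [Fin.val_mk, Nat.mod_eq_of_lt r.isLt]
      exact hr1
    · rw [hadjG]; simp only [Fin.val_mk, Nat.mod_eq_of_lt r.isLt]; exact hr2
  have hubC : Hub Gᶜ := by
    intro u v
    by_cases huv : u = v
    · exact Or.inl huv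
    by_cases hc : cadj (u.val % 5) (v.val % 5)
    · refine Or.inr (Or.inr ⟨huv, ?_⟩)
      obtain ⟨r, hr1, hr2, hra, hrb⟩ := key2 ⟨u.val % 5, hmod u⟩ ⟨v.val % 5, hmod v⟩ hc
      have hru : (⟨r.val, r.isLt.trans_le hn⟩ : Fin n) ≠ u := by
        intro hh; apply hra; apply Fin.ext
        have : r.val % 5 = u.val % 5 := by rw [← hh]
        simpa [Nat.mod_eq_of_lt r.isLt] using this
      have hrv : (⟨r.val, r.isLt.trans_le hn⟩ : Fin n) ≠ v := by
        intro hh; apply hrb; apply Fin.ext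
        have : r.val % 5 = v.val % 5 := by rw [← hh]
        simpa [Nat.mod_eq_of_lt r.isLt] using this
      refine ⟨⟨r.val, r.isLt.trans_le hn⟩, hru, hrv, ?_, ?_⟩
      · rw [hadjC]; refine ⟨Ne.symm hru, ?_⟩
        simp only [Fin.val_mk, Nat.mod_eq_of_lt r.isLt]
        exact hr1
      · rw [hadjC]; refine ⟨hrv, ?_⟩
        simp only [Fin.val_mk, Nat.mod_eq_of_lt r.isLt]; exact hr2
    · exact Or.inr (Or.inl ((hadjC u v).mpr ⟨huv, hc⟩))
  have h02 : (⟨0, by omega⟩ : Fin n) ≠ ⟨2, by omega⟩ := by simp [Fin.ext_iff]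
  have h01 : (⟨0, by omega⟩ : Fin n) ≠ ⟨1, by omega⟩ := by simp [Fin.ext_iff]
  have hn02 : ¬ G.Adj ⟨0, by omega⟩ ⟨2, by omega⟩ := by
    rw [hadjG]; simp only [Fin.val_mk]; unfold cadj; omega
  have hn01 : ¬ Gᶜ.Adj ⟨0, by omega⟩ ⟨1, by omega⟩ := by
    rw [hadjC]; simp only [Fin.val_mk]; unfold cadj
    rintro ⟨-, hh⟩; apply hh; left; norm_num
  have r1 : rvc G = 1 := hub_rvc_one hubG h02 hn02
  have r2 : rvc Gᶜ = 1 := hub_rvc_one hubC h01 hn01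
  exact ⟨G, hub_diam_two hubG h02 hn02, hub_diam_two hubC h01 hn01, r1, r2, by rw [r1, r2]⟩
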